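/- Let (x_n) be a sequence of positive reals and let s_n = x_1 + x_2 + ... + x_n. If there exists a real a < 4 such that s_{n+1}/x_n < a for all n ≥ 1, then a contradiction follows; equivalently, for every sequence of positive reals, sup_n s_{n+1}/x_n ≥ 4. -/

import Mathlib

/-- Deterministic lower bound for online bidding: for any sequence of positive
bids `x 1, x 2, ...` with partial sums `s n = x 1 + ... + x n`, and any `a < 4`,
it is impossible that `s (n+1) / x n < a` for all `n ≥ 1`; equivalently there is
some `n ≥ 1` with `s (n+1) / x n ≥ a`, so `sup_n s (n+1) / x n ≥ 4`. -/
theorem stmt0 (x : ℕ → ℝ) (hx : ∀ n, 1 ≤ n → 0 < x n) (a : ℝ) (ha : a < 4) :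
    ∃ n, 1 ≤ n ∧ a ≤ (∑ i ∈ Finset.Icc 1 (n + 1), x i) / x n := by
  by_contra hcon
  push_neg at hcon
  set s : ℕ → ℝ := fun n => ∑ i ∈ Finset.Icc 1 n, x i with hsdef
  have hss : ∀ n, s (n + 1) = s n + x (n + 1) := by
    intro n
    simpa [hsdef] using Finset.sum_Icc_succ_top (Nat.le_add_left 1 n) x
  have hspos : ∀ n, 1 ≤ n → 0 < s n := by
    intro n hn
    apply Finset.sum_pos
    · intro i hi
      exact hx i (Finset.mem_Icc.mp hi).1
    · exact ⟨1, Finset.mem_Icc.mpr ⟨le_refl 1, hn⟩⟩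
  have hlt : ∀ n, 1 ≤ n → s (n + 1) < a * x n := by
    intro n hn
    have h := hcon n hn
    rwa [div_lt_iff₀ (hx n hn)] at h
  have hs1 : s 1 = x 1 := by simp [hsdef]
  -- a > 1
  have ha1 : 1 < a := by
    have h2 := hlt 1 le_rfl
    have hx1 := hx 1 le_rfl
    have hx2 := hx 2 (by norm_num)
    have : s 2 = x 1 + x 2 := by rw [hss 1, hs1]
    nlinarith
  have ha0 : 0 < a := by linarith
  have hsa : 0 < Real.sqrt a := Real.sqrt_pos.2 ha0
  have hsq : Real.sqrt a ^ 2 = a := Real.sq_sqrt ha0.le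
  have hsa2 : Real.sqrt a < 2 := by
    nlinarith [hsq, hsa]
  set δ : ℝ := 2 * Real.sqrt a - a with hδdef
  have hδ : 0 < δ := by
    have : δ = Real.sqrt a * (2 - Real.sqrt a) := by rw [hδdef]; nlinarith [hsq]
    rw [this]; exact mul_pos hsa (by linarith)
  -- key algebraic lemma
  have key : ∀ r : ℝ, 0 < r → a - a / r ≤ r - δ := by
    intro r hr
    have h2 : a * r - a ≤ r ^ 2 - δ * r := by
      nlinarith [sq_nonneg (r - Real.sqrt a)]
    have e1 : a - a / r = (a * r - a) / r := by field_simp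
    have e2 : r - δ = (r ^ 2 - δ * r) / r := by field_simp
    rw [e1, e2]
    exact div_le_div_of_nonneg_right h2 hr.le
  set r : ℕ → ℝ := fun m => s (m + 2) / s (m + 1) with hrdef
  have hrgt1 : ∀ m, 1 < r m := by
    intro m
    have hp : 0 < s (m + 1) := hspos _ (Nat.le_add_left 1 m)
    have : s (m + 1) < s (m + 2) := by
      have := hx (m + 2) (by omega)
      rw [hss (m + 1)]; linarith
    rw [hrdef]
    exact (one_lt_div hp).2 this
  have step : ∀ m, r (m + 1) ≤ r m - δ := by
    intro m
    have hp : 0 < s (m + 1) := hspos _ (by omega)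
    have hq : 0 < s (m + 2) := hspos _ (by omega)
    have hxt : x (m + 2) = s (m + 2) - s (m + 1) := by rw [hss (m + 1)]; ring
    have h3 : s (m + 3) < a * (s (m + 2) - s (m + 1)) := by
      have := hlt (m + 2) (by omega)
      rwa [hxt] at this
    have h4 : r (m + 1) < a - a * s (m + 1) / s (m + 2) := by
      rw [hrdef]
      have e : a - a * s (m + 1) / s (m + 2)
          = (a * (s (m + 2) - s (m + 1))) / s (m + 2) := by field_simp
      rw [e, div_lt_div_iff_of_pos_right hq]
      exact h3
    have h5 : a - a / r m ≤ r m - δ := key (r m) (by linarith [hrgt1 m])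
    have e2 : a / r m = a * s (m + 1) / s (m + 2) := by
      rw [hrdef]
      rw [div_div_eq_mul_div]
    rw [e2] at h5
    linarith
  have chain : ∀ m : ℕ, r m ≤ r 0 - m * δ := by
    intro m
    induction m with
    | zero => simp
    | succ k ih =>
      have := step k
      push_cast
      linarith
  obtain ⟨m, hm⟩ := exists_nat_gt ((r 0 - 1) / δ)
  have hmd : r 0 - 1 < m * δ := by
    rw [div_lt_iff₀ hδ] at hm
    linarith
  have := chain m
  have := hrgt1 m
  linarith
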